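/- Let Φ and Ψ be two orthonormal bases of ℂ^N with coherence μ, and let D = [Φ Ψ] be the N×2N concatenated dictionary. If x = Dγ with ‖γ‖₀ < 1/μ, then γ is the unique representation of x with fewer than 1/μ nonzero entries: any γ' with Dγ' = x and ‖γ'‖₀ < 1/μ equals γ. -/

import Mathlib

open scoped BigOperators

set_option maxHeartbeats 1000000

/-- Uniqueness of sparse representations in a dictionary made of two orthonormal bases:
if `‖γ‖₀ < 1/μ` then the representation is unique among all such sparse representations. -/
theorem stmt4 {N : ℕ} (hN : 0 < N)
    (φ ψ : OrthonormalBasis (Fin N) ℂ (EuclideanSpace ℂ (Fin N)))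
    (μ : ℝ)
    (hμ : μ = ⨆ ℓ : Fin N, ⨆ r : Fin N, ‖(inner ℂ (φ ℓ) (ψ r) : ℂ)‖)
    (d : Fin N ⊕ Fin N → EuclideanSpace ℂ (Fin N))
    (hd₁ : ∀ ℓ, d (Sum.inl ℓ) = φ ℓ) (hd₂ : ∀ ℓ, d (Sum.inr ℓ) = ψ ℓ)
    (x : EuclideanSpace ℂ (Fin N)) (γ γ' : Fin N ⊕ Fin N → ℂ)
    (hx : x = ∑ i : Fin N ⊕ Fin N, γ i • d i)
    (hx' : x = ∑ i : Fin N ⊕ Fin N, γ' i • d i)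
    (hγ : ((Finset.univ.filter fun i : Fin N ⊕ Fin N => γ i ≠ 0).card : ℝ) < 1 / μ)
    (hγ' : ((Finset.univ.filter fun i : Fin N ⊕ Fin N => γ' i ≠ 0).card : ℝ) < 1 / μ) :
    γ = γ' := by
  classical
  -- μ is positive
  have hμpos : 0 < μ := by
    by_contra h
    push_neg at h
    have h1 : (1 : ℝ) / μ ≤ 0 := by
      rcases lt_or_eq_of_le h with h' | h'
      · exact le_of_lt (div_neg_of_pos_of_neg one_pos h')
      · rw [h', div_zero]
    have h2 : (0 : ℝ) ≤ ((Finset.univ.filter fun i : Fin N ⊕ Fin N => γ i ≠ 0).card : ℝ) := by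
      positivity
    linarith
  set δ : Fin N ⊕ Fin N → ℂ := fun i => γ i - γ' i with hδdef
  have hsum0 : ∑ i : Fin N ⊕ Fin N, δ i • d i = 0 := by
    have : ∑ i : Fin N ⊕ Fin N, δ i • d i
        = (∑ i : Fin N ⊕ Fin N, γ i • d i) - ∑ i : Fin N ⊕ Fin N, γ' i • d i := by
      rw [← Finset.sum_sub_distrib]
      refine Finset.sum_congr rfl fun i _ => ?_
      simp [hδdef, sub_smul]
    rw [this, ← hx, ← hx', sub_self]
  set a : Fin N → ℂ := fun ℓ => δ (Sum.inl ℓ) with ha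
  set b : Fin N → ℂ := fun r => δ (Sum.inr r) with hb
  have hsplit : (∑ ℓ : Fin N, a ℓ • φ ℓ) + ∑ r : Fin N, b r • ψ r = 0 := by
    rw [← hsum0, Fintype.sum_sum_type]
    simp [ha, hb, hd₁, hd₂]
  set v : EuclideanSpace ℂ (Fin N) := ∑ ℓ : Fin N, a ℓ • φ ℓ with hv
  have hv' : v = ∑ r : Fin N, (-b r) • ψ r := by
    simp only [neg_smul, Finset.sum_neg_distrib]
    exact eq_neg_of_add_eq_zero_left hsplit
  -- coefficients are inner products with v
  have hφv : ∀ ℓ, (inner ℂ (φ ℓ) v : ℂ) = a ℓ := fun ℓ => by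
    rw [hv]; exact φ.orthonormal.inner_right_fintype a ℓ
  have hψv : ∀ r, (inner ℂ (ψ r) v : ℂ) = -b r := fun r => by
    rw [hv']; exact ψ.orthonormal.inner_right_fintype (fun r => -b r) r
  set S : ℝ := ∑ ℓ : Fin N, ‖a ℓ‖ ^ 2 with hS
  have hSnn : 0 ≤ S := Finset.sum_nonneg fun _ _ => by positivity
  have hvv : (inner ℂ v v : ℂ) = (S : ℂ) := by
    conv_lhs => rw [hv]
    rw [sum_inner]
    simp only [inner_smul_left, hφv]
    rw [hS]
    push_cast
    refine Finset.sum_congr rfl fun ℓ _ => ?_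
    rw [← hv, hφv, RCLike.conj_mul]
    norm_num
  set Sb : ℝ := ∑ r : Fin N, ‖b r‖ ^ 2 with hSb
  have hvvb : (inner ℂ v v : ℂ) = (Sb : ℂ) := by
    conv_lhs => rw [hv']
    rw [sum_inner]
    simp only [inner_smul_left, ψ.orthonormal.inner_right_fintype (fun r => -b r)]
    rw [hSb]
    push_cast
    refine Finset.sum_congr rfl fun r _ => ?_
    rw [map_neg, neg_mul_neg, RCLike.conj_mul]
    norm_num
  have hSSb : S = Sb := by
    have := hvv.symm.trans hvvb
    exact_mod_cast this
  -- coherence bound on each inner product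
  have hcoh : ∀ ℓ r : Fin N, ‖(inner ℂ (φ ℓ) (ψ r) : ℂ)‖ ≤ μ := by
    intro ℓ r
    rw [hμ]
    have h1 : ‖(inner ℂ (φ ℓ) (ψ r) : ℂ)‖ ≤ ⨆ r' : Fin N, ‖(inner ℂ (φ ℓ) (ψ r') : ℂ)‖ :=
      le_ciSup (f := fun r' : Fin N => ‖(inner ℂ (φ ℓ) (ψ r') : ℂ)‖)
        (Set.Finite.bddAbove (Set.finite_range _)) r
    have h2 : (⨆ r' : Fin N, ‖(inner ℂ (φ ℓ) (ψ r') : ℂ)‖)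
        ≤ ⨆ ℓ' : Fin N, ⨆ r' : Fin N, ‖(inner ℂ (φ ℓ') (ψ r') : ℂ)‖ :=
      le_ciSup (f := fun ℓ' : Fin N => ⨆ r' : Fin N, ‖(inner ℂ (φ ℓ') (ψ r') : ℂ)‖)
        (Set.Finite.bddAbove (Set.finite_range _)) ℓ
    exact h1.trans h2
  set P : ℝ := ∑ ℓ : Fin N, ‖a ℓ‖ with hP
  set Q : ℝ := ∑ r : Fin N, ‖b r‖ with hQ
  have hPnn : 0 ≤ P := Finset.sum_nonneg fun _ _ => norm_nonneg _
  have hQnn : 0 ≤ Q := Finset.sum_nonneg fun _ _ => norm_nonneg _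
  -- the key estimate S ≤ μ * P * Q
  have hkey : S ≤ μ * P * Q := by
    have hmix : (inner ℂ v v : ℂ)
        = ∑ r : Fin N, ∑ ℓ : Fin N, (-b r) * ((starRingEnd ℂ) (a ℓ) * inner ℂ (φ ℓ) (ψ r)) := by
      calc (inner ℂ v v : ℂ) = inner ℂ v (∑ r : Fin N, (-b r) • ψ r) := by rw [← hv']
        _ = ∑ r : Fin N, (-b r) * (inner ℂ v (ψ r) : ℂ) := by
            rw [inner_sum]
            exact Finset.sum_congr rfl fun r _ => by rw [inner_smul_right]
        _ = ∑ r : Fin N, ∑ ℓ : Fin N, (-b r) * ((starRingEnd ℂ) (a ℓ) * inner ℂ (φ ℓ) (ψ r)) := by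
            refine Finset.sum_congr rfl fun r _ => ?_
            rw [hv, sum_inner, Finset.mul_sum]
            exact Finset.sum_congr rfl fun ℓ _ => by rw [inner_smul_left]
    have h1 : S = ‖(inner ℂ v v : ℂ)‖ := by
      rw [hvv]
      simp [abs_of_nonneg hSnn]
    rw [h1, hmix]
    calc ‖∑ r : Fin N, ∑ ℓ : Fin N, (-b r) * ((starRingEnd ℂ) (a ℓ) * inner ℂ (φ ℓ) (ψ r))‖
        ≤ ∑ r : Fin N, ∑ ℓ : Fin N, ‖a ℓ‖ * ‖b r‖ * μ := by
          refine (norm_sum_le _ _).trans (Finset.sum_le_sum fun r _ => ?_)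
          refine (norm_sum_le _ _).trans (Finset.sum_le_sum fun ℓ _ => ?_)
          rw [norm_mul, norm_mul, norm_neg, RCLike.norm_conj]
          calc ‖b r‖ * (‖a ℓ‖ * ‖(inner ℂ (φ ℓ) (ψ r) : ℂ)‖)
              ≤ ‖b r‖ * (‖a ℓ‖ * μ) := by gcongr; exact hcoh ℓ r
            _ = ‖a ℓ‖ * ‖b r‖ * μ := by ring
      _ = μ * P * Q := by
          rw [hP, hQ, Finset.sum_comm]
          simp_rw [mul_right_comm, ← Finset.mul_sum, ← Finset.sum_mul]
          ring
  -- Cauchy–Schwarz on supports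
  set Sa : Finset (Fin N) := Finset.univ.filter fun ℓ => a ℓ ≠ 0 with hSa
  set Sbf : Finset (Fin N) := Finset.univ.filter fun r => b r ≠ 0 with hSbf
  have hPcs : P ^ 2 ≤ (Sa.card : ℝ) * S := by
    have hrestr : P = ∑ ℓ ∈ Sa, ‖a ℓ‖ := by
      rw [hP]
      refine (Finset.sum_subset (Finset.filter_subset _ _) fun ℓ _ h => ?_).symm
      simp only [hSa, Finset.mem_filter, Finset.mem_univ, true_and, not_not] at h
      simp [h]
    have hcs := sq_sum_le_card_mul_sum_sq (s := Sa) (f := fun ℓ => ‖a ℓ‖)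
    have hsub : ∑ ℓ ∈ Sa, ‖a ℓ‖ ^ 2 ≤ S := by
      rw [hS]
      exact Finset.sum_le_sum_of_subset_of_nonneg (Finset.filter_subset _ _)
        fun _ _ _ => by positivity
    rw [hrestr]
    calc (∑ ℓ ∈ Sa, ‖a ℓ‖) ^ 2 ≤ (Sa.card : ℝ) * ∑ ℓ ∈ Sa, ‖a ℓ‖ ^ 2 := hcs
      _ ≤ (Sa.card : ℝ) * S := mul_le_mul_of_nonneg_left hsub (Nat.cast_nonneg _)
  have hQcs : Q ^ 2 ≤ (Sbf.card : ℝ) * S := by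
    have hrestr : Q = ∑ r ∈ Sbf, ‖b r‖ := by
      rw [hQ]
      refine (Finset.sum_subset (Finset.filter_subset _ _) fun r _ h => ?_).symm
      simp only [hSbf, Finset.mem_filter, Finset.mem_univ, true_and, not_not] at h
      simp [h]
    have hcs := sq_sum_le_card_mul_sum_sq (s := Sbf) (f := fun r => ‖b r‖)
    have hsub : ∑ r ∈ Sbf, ‖b r‖ ^ 2 ≤ Sb := by
      rw [hSb]
      exact Finset.sum_le_sum_of_subset_of_nonneg (Finset.filter_subset _ _)
        fun _ _ _ => by positivity
    rw [hrestr, hSSb]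
    calc (∑ r ∈ Sbf, ‖b r‖) ^ 2 ≤ (Sbf.card : ℝ) * ∑ r ∈ Sbf, ‖b r‖ ^ 2 := hcs
      _ ≤ (Sbf.card : ℝ) * Sb := mul_le_mul_of_nonneg_left hsub (Nat.cast_nonneg _)
  -- cardinality bound
  have hcard : (Sa.card : ℝ) + (Sbf.card : ℝ) < 2 / μ := by
    set A : Finset (Fin N ⊕ Fin N) := Finset.univ.filter fun i => δ i ≠ 0 with hA
    have hsub1 : Sa.image Sum.inl ∪ Sbf.image Sum.inr ⊆ A := by
      intro i hi
      rcases Finset.mem_union.mp hi with h | h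
      · obtain ⟨ℓ, hℓ, rfl⟩ := Finset.mem_image.mp h
        simp only [hSa, Finset.mem_filter, Finset.mem_univ, true_and] at hℓ
        simpa [hA] using hℓ
      · obtain ⟨r, hr, rfl⟩ := Finset.mem_image.mp h
        simp only [hSbf, Finset.mem_filter, Finset.mem_univ, true_and] at hr
        simpa [hA] using hr
    have hdisj : Disjoint (Sa.image Sum.inl) (Sbf.image Sum.inr) := by
      rw [Finset.disjoint_left]
      intro i hi hi'
      obtain ⟨ℓ, _, rfl⟩ := Finset.mem_image.mp hi
      obtain ⟨r, _, h⟩ := Finset.mem_image.mp hi'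
      exact absurd h (by simp)
    have hcard1 : Sa.card + Sbf.card ≤ A.card := by
      have := Finset.card_le_card hsub1
      rwa [Finset.card_union_of_disjoint hdisj,
        Finset.card_image_of_injective _ Sum.inl_injective,
        Finset.card_image_of_injective _ Sum.inr_injective] at this
    have hsub2 : A ⊆ (Finset.univ.filter fun i => γ i ≠ 0) ∪
        (Finset.univ.filter fun i => γ' i ≠ 0) := by
      intro i hi
      simp only [hA, Finset.mem_filter, Finset.mem_univ, true_and, hδdef] at hi
      simp only [Finset.mem_union, Finset.mem_filter, Finset.mem_univ, true_and]
      by_contra h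
      push_neg at h
      rw [h.1, h.2, sub_self] at hi
      exact hi rfl
    have hcard2 : (A.card : ℝ) ≤
        ((Finset.univ.filter fun i : Fin N ⊕ Fin N => γ i ≠ 0).card : ℝ) +
        ((Finset.univ.filter fun i : Fin N ⊕ Fin N => γ' i ≠ 0).card : ℝ) := by
      have := (Finset.card_le_card hsub2).trans (Finset.card_union_le _ _)
      exact_mod_cast this
    have : (Sa.card : ℝ) + (Sbf.card : ℝ) ≤ (A.card : ℝ) := by exact_mod_cast hcard1
    have h2μ : (1 : ℝ) / μ + 1 / μ = 2 / μ := by ring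
    linarith
  -- conclude S = 0
  have hS0 : S = 0 := by
    by_contra h
    have hSpos : 0 < S := lt_of_le_of_ne hSnn (Ne.symm h)
    have hca : (0 : ℝ) ≤ (Sa.card : ℝ) := Nat.cast_nonneg _
    have hcb : (0 : ℝ) ≤ (Sbf.card : ℝ) := Nat.cast_nonneg _
    have hsq : S ^ 2 ≤ μ ^ 2 * (((Sa.card : ℝ) * S) * ((Sbf.card : ℝ) * S)) := by
      calc S ^ 2 ≤ (μ * P * Q) ^ 2 := by
            have := mul_nonneg (mul_nonneg hμpos.le hPnn) hQnn
            nlinarith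
        _ = μ ^ 2 * (P ^ 2 * Q ^ 2) := by ring
        _ ≤ μ ^ 2 * (((Sa.card : ℝ) * S) * ((Sbf.card : ℝ) * S)) := by
            have h3 : P ^ 2 * Q ^ 2 ≤ ((Sa.card : ℝ) * S) * ((Sbf.card : ℝ) * S) :=
              mul_le_mul hPcs hQcs (sq_nonneg Q) (mul_nonneg hca hSnn)
            exact mul_le_mul_of_nonneg_left h3 (sq_nonneg μ)
    have hμ2 : μ * ((Sa.card : ℝ) + (Sbf.card : ℝ)) < 2 := by
      have := (mul_lt_mul_of_pos_left hcard hμpos)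
      calc μ * ((Sa.card : ℝ) + (Sbf.card : ℝ)) < μ * (2 / μ) := this
        _ = 2 := by field_simp
    have ht0 : 0 ≤ μ * ((Sa.card : ℝ) + (Sbf.card : ℝ)) := by positivity
    have ht2 : (μ * ((Sa.card : ℝ) + (Sbf.card : ℝ))) ^ 2 < 4 := by nlinarith
    nlinarith [sq_nonneg (μ * (Sa.card : ℝ) - μ * (Sbf.card : ℝ)), mul_pos hSpos hSpos,
      mul_pos (show (0:ℝ) < 4 - (μ * ((Sa.card : ℝ) + (Sbf.card : ℝ))) ^ 2 by linarith)
        (mul_pos hSpos hSpos)]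
  -- hence all coefficients vanish
  have ha0 : ∀ ℓ, a ℓ = 0 := by
    intro ℓ
    have h1 : ‖a ℓ‖ ^ 2 ≤ S := by
      rw [hS]
      exact Finset.single_le_sum (f := fun i => ‖a i‖ ^ 2) (fun i _ => by positivity)
        (Finset.mem_univ ℓ)
    have h2 : ‖a ℓ‖ ^ 2 = 0 := le_antisymm (hS0 ▸ h1) (by positivity)
    exact norm_eq_zero.mp (pow_eq_zero_iff two_ne_zero |>.mp h2)
  have hb0 : ∀ r, b r = 0 := by
    intro r
    have hSb0 : Sb = 0 := hSSb ▸ hS0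
    have h1 : ‖b r‖ ^ 2 ≤ Sb := by
      rw [hSb]
      exact Finset.single_le_sum (f := fun i => ‖b i‖ ^ 2) (fun i _ => by positivity)
        (Finset.mem_univ r)
    have h2 : ‖b r‖ ^ 2 = 0 := le_antisymm (hSb0 ▸ h1) (by positivity)
    exact norm_eq_zero.mp (pow_eq_zero_iff two_ne_zero |>.mp h2)
  funext i
  have : δ i = 0 := by
    cases i with
    | inl ℓ => exact ha0 ℓ
    | inr r => exact hb0 r
  have := sub_eq_zero.mp this
  exact this
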